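/- Let k, m ≥ 1, Q ∈ ℝ^{k×k} symmetric, d ∈ ℝ^k, v ∈ ℝ, F ∈ ℝ^{k×m}, w ∈ ℝ^m, and τ, θ ∈ ℝ^k with τ ≥ 0 and θ ≥ 0 componentwise. Define F̂ := [F θ −τ] ∈ ℝ^{k×(m+2)} (F with appended columns θ and −τ) and ŵ := (w; 1; −1) ∈ ℝ^{m+2}. Suppose Λ₀, Λ_{m+1} ∈ ℝ^k with Λ₀ ≥ 0 and Λ_{m+1} ≥ 0, Λ ∈ ℝ^{k×m} with all entries nonnegative, and a symmetric P ∈ ℝ^{k×k} with all entries nonnegative satisfy: −Q − P − Λ₀τᵀ − τΛ₀ᵀ + ΛFᵀ + FΛᵀ + Λ_{m+1}θᵀ + θΛ_{m+1}ᵀ is positive semidefinite. Let M ∈ ℝ be any number such that 2(d − Λ₀ + Λw + Λ_{m+1})ᵀ y ≤ M for every y ∈ ℝ^k with Fᵀy ≤ w, τᵀy ≥ 1, θᵀy ≤ 1, y ≥ 0. Then for every pair (Y, y) that is Shor-feasible for the data (F̂, ŵ), one has ⟨Q, Y⟩ + 2dᵀy ≤ M. (This is the corollary bounding the DNN relaxation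 value φ̄ᴰ_{τ,θ} of the cut problem by v + max_{y ∈ R_τ ∩ Δ(θ)} 2(d − Λ₀ + Λw + Λ_{m+1})ᵀy.) -/

import Mathlib

open Matrix

noncomputable section

/-- Frobenius (trace) inner product of real matrices. -/
def frob {ι : Type} [Fintype ι] (A B : Matrix ι ι ℝ) : ℝ := (Aᵀ * B).trace

/-- `(Y, y)` is Shor-feasible for the data `(F, w)`. -/
def ShorFeasible {k : ℕ} {ι : Type} [Fintype ι]
    (F : Matrix (Fin k) ι ℝ) (w : ι → ℝ)
    (Y : Matrix (Fin k) (Fin k) ℝ) (y : Fin k → ℝ) : Prop :=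
  (∀ i, Fᵀ.mulVec y i ≤ w i) ∧
  (∀ i, 0 ≤ y i) ∧
  (∀ i j, 0 ≤ (Fᵀ * Y * F - vecMulVec w (Fᵀ.mulVec y) - vecMulVec (Fᵀ.mulVec y) w
      + vecMulVec w w) i j) ∧
  (∀ i j, 0 ≤ Y i j) ∧
  (∀ i j, 0 ≤ (vecMulVec w y - Fᵀ * Y) i j) ∧
  (fromBlocks Y (Matrix.of fun i (_ : Unit) => y i)
    (Matrix.of fun (_ : Unit) j => y j) 1).PosSemidef

/-- `F̂ := [F θ −τ]`: `F` with the columns `θ` and `−τ` appended. -/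
def Fhat {k m : ℕ} (F : Matrix (Fin k) (Fin m) ℝ) (τ θ : Fin k → ℝ) :
    Matrix (Fin k) (Fin m ⊕ Fin 2) ℝ :=
  Matrix.of fun a j => Sum.elim (fun i => F a i) (fun b => if b = 0 then θ a else -τ a) j

/-- `ŵ := (w; 1; −1)`. -/
def what {m : ℕ} (w : Fin m → ℝ) : Fin m ⊕ Fin 2 → ℝ :=
  Sum.elim w (fun b => if b = 0 then (1 : ℝ) else -1)


lemma frob_eq_sum {ι : Type} [Fintype ι] (A B : Matrix ι ι ℝ) :
    (Aᵀ * B).trace = ∑ a, ∑ b, A a b * B a b := by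
  simp only [Matrix.trace, Matrix.diag, Matrix.mul_apply, Matrix.transpose_apply]
  exact Finset.sum_comm

lemma trace_conj_self_nonneg {n p : Type} [Fintype n] [Fintype p] (M : Matrix n p ℝ) :
    0 ≤ (Mᵀ * M).trace := by
  simp only [Matrix.trace, Matrix.diag, Matrix.mul_apply, Matrix.transpose_apply]
  exact Finset.sum_nonneg fun j _ => Finset.sum_nonneg fun i _ => mul_self_nonneg _

lemma psd_frobsum_nonneg {n : Type} [Fintype n] [DecidableEq n] {A B : Matrix n n ℝ}
    (hA : A.PosSemidef) (hB : B.PosSemidef) : 0 ≤ ∑ a, ∑ b, A a b * B a b := by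
  obtain ⟨C, hC⟩ : ∃ C : Matrix n n ℝ, A = Cᴴ * C := by
    open scoped MatrixOrder in
    obtain ⟨E, hE⟩ := CStarAlgebra.nonneg_iff_eq_star_mul_self.mp hA.nonneg
    exact ⟨E, hE⟩
  obtain ⟨D, hD⟩ : ∃ D : Matrix n n ℝ, B = Dᴴ * D := by
    open scoped MatrixOrder in
    obtain ⟨E, hE⟩ := CStarAlgebra.nonneg_iff_eq_star_mul_self.mp hB.nonneg
    exact ⟨E, hE⟩
  rw [← frob_eq_sum]
  have hAt : Aᵀ = A := by
    have := hA.isHermitian.eq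
    rwa [Matrix.conjTranspose_eq_transpose_of_trivial] at this
  rw [hAt, hC, hD]
  rw [Matrix.conjTranspose_eq_transpose_of_trivial, Matrix.conjTranspose_eq_transpose_of_trivial]
  have : Cᵀ * C * (Dᵀ * D) = Cᵀ * (C * Dᵀ * D) := by
    simp [Matrix.mul_assoc]
  rw [this, Matrix.trace_mul_comm, Matrix.mul_assoc, Matrix.mul_assoc]
  have h2 : C * (Dᵀ * (D * Cᵀ)) = (D * Cᵀ)ᵀ * (D * Cᵀ) := by
    simp [Matrix.transpose_mul, Matrix.mul_assoc]
  rw [h2]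
  exact trace_conj_self_nonneg _

/-- upper bound on the DNN relaxation value of the cut problem from a
certificate `(Λ₀, Λ, Λ_{m+1}, P)`. -/
theorem dnn_cut_bound {k m : ℕ} (hk : 1 ≤ k) (hm : 1 ≤ m)
    (Q : Matrix (Fin k) (Fin k) ℝ) (hQ : Q.IsSymm) (d : Fin k → ℝ) (v : ℝ)
    (F : Matrix (Fin k) (Fin m) ℝ) (w : Fin m → ℝ)
    (τ θ : Fin k → ℝ) (hτ : ∀ i, 0 ≤ τ i) (hθ : ∀ i, 0 ≤ θ i)
    (Λ₀ Λm1 : Fin k → ℝ) (hΛ₀ : ∀ i, 0 ≤ Λ₀ i) (hΛm1 : ∀ i, 0 ≤ Λm1 i)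
    (Λ : Matrix (Fin k) (Fin m) ℝ) (hΛ : ∀ i j, 0 ≤ Λ i j)
    (P : Matrix (Fin k) (Fin k) ℝ) (hPs : P.IsSymm) (hPnn : ∀ i j, 0 ≤ P i j)
    (hpsd : (-Q - P - vecMulVec Λ₀ τ - vecMulVec τ Λ₀ + Λ * Fᵀ + F * Λᵀ
        + vecMulVec Λm1 θ + vecMulVec θ Λm1).PosSemidef)
    (M : ℝ)
    (hM : ∀ y : Fin k → ℝ, (∀ i, Fᵀ.mulVec y i ≤ w i) → 1 ≤ τ ⬝ᵥ y → θ ⬝ᵥ y ≤ 1 →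
      (∀ i, 0 ≤ y i) →
      2 * ((fun i => d i - Λ₀ i + Λ.mulVec w i + Λm1 i) ⬝ᵥ y) ≤ M) :
    ∀ (Y : Matrix (Fin k) (Fin k) ℝ) (y : Fin k → ℝ), Y.IsSymm →
      ShorFeasible (Fhat F τ θ) (what w) Y y →
      frob Q Y + 2 * (d ⬝ᵥ y) ≤ M := by
  intro Y y hYs hSF
  obtain ⟨h1, h2, _h3, h4, h5, h6⟩ := hSF
  have hYab : ∀ a b, Y a b = Y b a := fun a b => by
    have := congrFun (congrFun hYs b) a
    simpa [Matrix.transpose_apply] using this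
  -- linear feasibility of y
  have hFy : ∀ i, Fᵀ.mulVec y i ≤ w i := by
    intro i
    have := h1 (Sum.inl i)
    simpa [Fhat, what, Matrix.mulVec, dotProduct] using this
  have hθy : θ ⬝ᵥ y ≤ 1 := by
    have := h1 (Sum.inr 0)
    simpa [Fhat, what, Matrix.mulVec, dotProduct] using this
  have hτy : 1 ≤ τ ⬝ᵥ y := by
    have := h1 (Sum.inr 1)
    simp [Fhat, what, Matrix.mulVec, dotProduct,
      (by decide : ((1:Fin 2) = 0) = False)] at this
    simpa [dotProduct] using this
  -- constraint (C)
  have hC : ∀ a i, ((Fhat F τ θ)ᵀ * Y) a i ≤ what w a * y i := by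
    intro a i
    have := h5 a i
    simp only [Matrix.sub_apply, Matrix.vecMulVec_apply, sub_nonneg] at this
    exact this
  have hFY : ∀ j i, ∑ b, F b j * Y b i ≤ w j * y i := by
    intro j i
    have := hC (Sum.inl j) i
    simpa [Fhat, what, Matrix.mul_apply] using this
  have hθY : ∀ i, ∑ b, θ b * Y b i ≤ y i := by
    have := fun i => hC (Sum.inr 0) i
    intro i
    have := this i
    simpa [Fhat, what, Matrix.mul_apply] using this
  have hτY : ∀ i, y i ≤ ∑ b, τ b * Y b i := by
    intro i
    have := hC (Sum.inr 1) i
    simp [Fhat, what, Matrix.mul_apply,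
      (by decide : ((1:Fin 2) = 0) = False)] at this
    linarith [this]
  -- PSD of Y
  have hYpsd : Y.PosSemidef := by
    have hsub := h6.submatrix (Sum.inl : Fin k → Fin k ⊕ Unit)
    have : (fromBlocks Y (Matrix.of fun i (_ : Unit) => y i)
        (Matrix.of fun (_ : Unit) j => y j) 1).submatrix
        (Sum.inl : Fin k → Fin k ⊕ Unit) (Sum.inl : Fin k → Fin k ⊕ Unit) = Y := by
      ext a b; simp [Matrix.submatrix_apply, Matrix.fromBlocks_apply₁₁]
    rwa [this] at hsub
  set S : Matrix (Fin k) (Fin k) ℝ :=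
    -Q - P - vecMulVec Λ₀ τ - vecMulVec τ Λ₀ + Λ * Fᵀ + F * Λᵀ
      + vecMulVec Λm1 θ + vecMulVec θ Λm1 with hSdef
  have hA : 0 ≤ ∑ a, ∑ b, S a b * Y a b := psd_frobsum_nonneg hpsd hYpsd
  have hB : 0 ≤ ∑ a, ∑ b, P a b * Y a b :=
    Finset.sum_nonneg fun a _ => Finset.sum_nonneg fun b _ => mul_nonneg (hPnn a b) (h4 a b)
  have hQab : ∀ a b, Q a b = -(S a b) - P a b - Λ₀ a * τ b - τ a * Λ₀ b
      + (Λ * Fᵀ) a b + (F * Λᵀ) a b + Λm1 a * θ b + θ a * Λm1 b := by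
    intro a b
    have : S a b = -Q a b - P a b - Λ₀ a * τ b - τ a * Λ₀ b
        + (Λ * Fᵀ) a b + (F * Λᵀ) a b + Λm1 a * θ b + θ a * Λm1 b := by
      rw [hSdef]
      simp [Matrix.sub_apply, Matrix.add_apply, Matrix.neg_apply, Matrix.vecMulVec_apply]
    linarith
  have hsplit : ∑ a, ∑ b, Q a b * Y a b =
      -(∑ a, ∑ b, S a b * Y a b) - (∑ a, ∑ b, P a b * Y a b)
      - (∑ a, ∑ b, Λ₀ a * τ b * Y a b) - (∑ a, ∑ b, τ a * Λ₀ b * Y a b)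
      + (∑ a, ∑ b, (Λ * Fᵀ) a b * Y a b) + (∑ a, ∑ b, (F * Λᵀ) a b * Y a b)
      + (∑ a, ∑ b, Λm1 a * θ b * Y a b) + (∑ a, ∑ b, θ a * Λm1 b * Y a b) := by
    have e : ∀ a b, Q a b * Y a b =
        -(S a b * Y a b) - P a b * Y a b - Λ₀ a * τ b * Y a b - τ a * Λ₀ b * Y a b
        + (Λ * Fᵀ) a b * Y a b + (F * Λᵀ) a b * Y a b
        + Λm1 a * θ b * Y a b + θ a * Λm1 b * Y a b := by
      intro a b; rw [hQab a b]; ring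
    simp only [e, Finset.sum_add_distrib, Finset.sum_sub_distrib, Finset.sum_neg_distrib]
  -- bounds on the six linear terms
  have hC1 : ∑ i, Λ₀ i * y i ≤ ∑ a, ∑ b, Λ₀ a * τ b * Y a b := by
    calc ∑ i, Λ₀ i * y i ≤ ∑ a, Λ₀ a * ∑ b, τ b * Y b a :=
          Finset.sum_le_sum fun a _ => mul_le_mul_of_nonneg_left (hτY a) (hΛ₀ a)
      _ = ∑ a, ∑ b, Λ₀ a * τ b * Y a b := by
          refine Finset.sum_congr rfl fun a _ => ?_
          rw [Finset.mul_sum]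
          exact Finset.sum_congr rfl fun b _ => by rw [hYab a b]; ring
  have hC2 : ∑ i, Λ₀ i * y i ≤ ∑ a, ∑ b, τ a * Λ₀ b * Y a b := by
    rw [Finset.sum_comm]
    calc ∑ i, Λ₀ i * y i ≤ ∑ b, Λ₀ b * ∑ a, τ a * Y a b :=
          Finset.sum_le_sum fun b _ => mul_le_mul_of_nonneg_left (hτY b) (hΛ₀ b)
      _ = ∑ b, ∑ a, τ a * Λ₀ b * Y a b := by
          refine Finset.sum_congr rfl fun b _ => ?_
          rw [Finset.mul_sum]
          exact Finset.sum_congr rfl fun a _ => by ring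
  have hE1 : ∑ a, ∑ b, Λm1 a * θ b * Y a b ≤ ∑ i, Λm1 i * y i := by
    calc ∑ a, ∑ b, Λm1 a * θ b * Y a b = ∑ a, Λm1 a * ∑ b, θ b * Y b a := by
          refine Finset.sum_congr rfl fun a _ => ?_
          rw [Finset.mul_sum]
          exact Finset.sum_congr rfl fun b _ => by rw [hYab a b]; ring
      _ ≤ ∑ i, Λm1 i * y i :=
          Finset.sum_le_sum fun a _ => mul_le_mul_of_nonneg_left (hθY a) (hΛm1 a)
  have hE2 : ∑ a, ∑ b, θ a * Λm1 b * Y a b ≤ ∑ i, Λm1 i * y i := by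
    rw [Finset.sum_comm]
    calc ∑ b, ∑ a, θ a * Λm1 b * Y a b = ∑ b, Λm1 b * ∑ a, θ a * Y a b := by
          refine Finset.sum_congr rfl fun b _ => ?_
          rw [Finset.mul_sum]
          exact Finset.sum_congr rfl fun a _ => by ring
      _ ≤ ∑ i, Λm1 i * y i :=
          Finset.sum_le_sum fun b _ => mul_le_mul_of_nonneg_left (hθY b) (hΛm1 b)
  have hD1 : ∑ a, ∑ b, (Λ * Fᵀ) a b * Y a b ≤ ∑ i, Λ.mulVec w i * y i := by
    calc ∑ a, ∑ b, (Λ * Fᵀ) a b * Y a b = ∑ a, ∑ j, Λ a j * ∑ b, F b j * Y b a := by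
          refine Finset.sum_congr rfl fun a _ => ?_
          calc ∑ b, (Λ * Fᵀ) a b * Y a b
              = ∑ b, ∑ j, Λ a j * (F b j * Y b a) := by
                refine Finset.sum_congr rfl fun b _ => ?_
                simp only [Matrix.mul_apply, Matrix.transpose_apply, Finset.sum_mul]
                exact Finset.sum_congr rfl fun j _ => by rw [hYab a b]; ring
            _ = ∑ j, ∑ b, Λ a j * (F b j * Y b a) := Finset.sum_comm
            _ = ∑ j, Λ a j * ∑ b, F b j * Y b a :=
                Finset.sum_congr rfl fun j _ => (Finset.mul_sum _ _ _).symm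
      _ ≤ ∑ a, ∑ j, Λ a j * (w j * y a) :=
          Finset.sum_le_sum fun a _ => Finset.sum_le_sum fun j _ =>
            mul_le_mul_of_nonneg_left (hFY j a) (hΛ a j)
      _ = ∑ i, Λ.mulVec w i * y i := by
          refine Finset.sum_congr rfl fun a _ => ?_
          simp only [Matrix.mulVec, dotProduct, Finset.sum_mul]
          exact Finset.sum_congr rfl fun j _ => by ring
  have hD2 : ∑ a, ∑ b, (F * Λᵀ) a b * Y a b ≤ ∑ i, Λ.mulVec w i * y i := by
    rw [Finset.sum_comm]
    calc ∑ b, ∑ a, (F * Λᵀ) a b * Y a b = ∑ b, ∑ j, Λ b j * ∑ a, F a j * Y a b := by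
          refine Finset.sum_congr rfl fun b _ => ?_
          calc ∑ a, (F * Λᵀ) a b * Y a b
              = ∑ a, ∑ j, Λ b j * (F a j * Y a b) := by
                refine Finset.sum_congr rfl fun a _ => ?_
                simp only [Matrix.mul_apply, Matrix.transpose_apply, Finset.sum_mul]
                exact Finset.sum_congr rfl fun j _ => by ring
            _ = ∑ j, ∑ a, Λ b j * (F a j * Y a b) := Finset.sum_comm
            _ = ∑ j, Λ b j * ∑ a, F a j * Y a b :=
                Finset.sum_congr rfl fun j _ => (Finset.mul_sum _ _ _).symm
      _ ≤ ∑ b, ∑ j, Λ b j * (w j * y b) :=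
          Finset.sum_le_sum fun b _ => Finset.sum_le_sum fun j _ =>
            mul_le_mul_of_nonneg_left (hFY j b) (hΛ b j)
      _ = ∑ i, Λ.mulVec w i * y i := by
          refine Finset.sum_congr rfl fun b _ => ?_
          simp only [Matrix.mulVec, dotProduct, Finset.sum_mul]
          exact Finset.sum_congr rfl fun j _ => by ring
  -- put everything together
  have hQY : ∑ a, ∑ b, Q a b * Y a b ≤
      2 * (∑ i, (-(Λ₀ i) + Λ.mulVec w i + Λm1 i) * y i) := by
    have expand : ∑ i, (-(Λ₀ i) + Λ.mulVec w i + Λm1 i) * y i =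
        -(∑ i, Λ₀ i * y i) + (∑ i, Λ.mulVec w i * y i) + (∑ i, Λm1 i * y i) := by
      simp only [← Finset.sum_neg_distrib, ← Finset.sum_add_distrib]
      exact Finset.sum_congr rfl fun i _ => by ring
    rw [hsplit, expand]
    linarith
  have hfrob : frob Q Y = ∑ a, ∑ b, Q a b * Y a b := frob_eq_sum Q Y
  have hMy := hM y hFy hτy hθy h2
  have hdotexp : (fun i => d i - Λ₀ i + Λ.mulVec w i + Λm1 i) ⬝ᵥ y =
      d ⬝ᵥ y + ∑ i, (-(Λ₀ i) + Λ.mulVec w i + Λm1 i) * y i := by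
    simp only [dotProduct, ← Finset.sum_add_distrib]
    exact Finset.sum_congr rfl fun i _ => by ring
  rw [hdotexp] at hMy
  rw [hfrob]
  linarith
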